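/- Let R be a commutative local ring in which 2 is invertible, and let A ∈ M₂(R). Then A is strongly rad-clean if and only if A ∈ GL₂(R), or A ∈ J(M₂(R)), or tr(A) ∈ U(R), det(A) ∈ J(R), and tr(A)² − 4det(A) is a square in R. -/

import Mathlib

/-- `j` lies in the Jacobson radical of the corner ring `eSe` (with identity `e`):
every element of the form `e - (eye)·j` is invertible in the corner ring. -/
def MemCornerJacobson {S : Type*} [Ring S] (e j : S) : Prop :=
  ∀ y : S, ∃ s : S,
    e * s * e = s ∧ s * (e - e * y * e * j) = e ∧ (e - e * y * e * j) * s = e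

/-- `a` is strongly rad-clean: `a = e + u` with `e` idempotent, `u` a unit,
`ae = ea` and `eae ∈ J(eSe)`. -/
def IsStronglyRadClean {S : Type*} [Ring S] (a : S) : Prop :=
  ∃ e : S, IsIdempotentElem e ∧ IsUnit (a - e) ∧ a * e = e * a ∧
    MemCornerJacobson e (e * a * e)

namespace Stmt7Aux
open Matrix IsLocalRing

variable {R : Type*} [CommRing R]

/-- Cayley-Hamilton for 2×2 matrices. -/
lemma ch2 (M : Matrix (Fin 2) (Fin 2) R) :
    M * M = M.trace • M - M.det • (1 : Matrix (Fin 2) (Fin 2) R) := by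
  ext i j
  fin_cases i <;> fin_cases j <;>
    simp [Matrix.mul_apply, Matrix.trace_fin_two, Matrix.det_fin_two,
      Fin.sum_univ_succ, Matrix.one_apply] <;> ring

/-- corner identity: for a trace-1 det-0 (rank one) idempotent frame. -/
lemma corner_eq (e X : Matrix (Fin 2) (Fin 2) R) (ht : e.trace = 1) (hd : e.det = 0) :
    e * X * e = (e * X * e).trace • e := by
  rw [Matrix.trace_fin_two] at ht
  rw [Matrix.det_fin_two] at hd
  have hd1 : e 1 1 = 1 - e 0 0 := by linear_combination ht
  have h : e 0 1 * e 1 0 - e 0 0 + e 0 0 ^ 2 = 0 := by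
    rw [hd1] at hd; linear_combination -hd
  ext i j
  fin_cases i <;> fin_cases j <;>
    · simp only [Matrix.mul_apply, Matrix.trace_fin_two, Fin.sum_univ_succ,
        Finset.univ_unique, Fin.default_eq_zero, Finset.sum_singleton, Matrix.smul_apply,
        smul_eq_mul, Fin.isValue, Fin.succ_zero_eq_one, Fin.zero_eta, Fin.mk_one]
      rw [hd1]
      first
      | linear_combination (X 1 1 * (1 - e 0 0) - X 0 0 * e 0 0) * h
      | linear_combination (-(e 0 1 * X 0 0 + X 0 1 + e 0 1 * X 1 1)) * h
      | linear_combination (-(e 1 0 * X 0 0 + X 1 0 + e 1 0 * X 1 1)) * h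
      | linear_combination (X 0 0 * e 0 0 - X 1 1 * (1 - e 0 0)) * h

lemma det_combo (e : Matrix (Fin 2) (Fin 2) R) (ht : e.trace = 1) (hd : e.det = 0) (x y : R) :
    (x • e + y • ((1 : Matrix (Fin 2) (Fin 2) R) - e)).det = x * y := by
  rw [Matrix.trace_fin_two] at ht
  rw [Matrix.det_fin_two] at hd
  have hd1 : e 1 1 = 1 - e 0 0 := by linear_combination ht
  have h : e 0 1 * e 1 0 - e 0 0 + e 0 0 ^ 2 = 0 := by
    rw [hd1] at hd; linear_combination -hd
  rw [Matrix.det_fin_two]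
  simp only [Matrix.add_apply, Matrix.sub_apply, Matrix.smul_apply, Matrix.one_apply,
    smul_eq_mul, Fin.isValue]
  norm_num
  rw [hd1]
  linear_combination (-(x - y) ^ 2) * h

variable [IsLocalRing R]

lemma isUnit_add_mem' {v j : R} (hv : IsUnit v) (hj : j ∈ maximalIdeal R) :
    IsUnit (v + j) := by
  by_contra h
  have h1 : v + j ∈ maximalIdeal R := (mem_maximalIdeal _).mpr (mem_nonunits_iff.mpr h)
  have h2 : v ∈ maximalIdeal R := by
    have := Ideal.sub_mem _ h1 hj
    simpa using this
  exact mem_nonunits_iff.mp ((mem_maximalIdeal _).mp h2) hv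

lemma mem_max_of_not_isUnit {a : R} (h : ¬ IsUnit a) : a ∈ maximalIdeal R :=
  (mem_maximalIdeal _).mpr (mem_nonunits_iff.mpr h)

/-- matrix `1 - B` with all entries of `B` in the maximal ideal is invertible -/
lemma isUnit_one_sub_matrix {B : Matrix (Fin 2) (Fin 2) R}
    (hB : ∀ i j, B i j ∈ maximalIdeal R) :
    IsUnit ((1 : Matrix (Fin 2) (Fin 2) R) - B) := by
  rw [Matrix.isUnit_iff_isUnit_det]
  have hdet : ((1 : Matrix (Fin 2) (Fin 2) R) - B).det
      = 1 + (-(B 0 0) - B 1 1 + (B 0 0 * B 1 1 - B 0 1 * B 1 0)) := by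
    simp [Matrix.det_fin_two, Matrix.one_apply]
    ring
  rw [hdet]
  refine isUnit_add_mem' isUnit_one ?_
  refine Ideal.add_mem _ (Ideal.sub_mem _ (neg_mem (hB 0 0)) (hB 1 1)) ?_
  exact Ideal.sub_mem _ (Ideal.mul_mem_right _ _ (hB 0 0)) (Ideal.mul_mem_right _ _ (hB 0 1))

lemma idem_zero_or_one {x : R} (h : x * x = x) : x = 0 ∨ x = 1 := by
  by_cases hu : IsUnit x
  · right
    obtain ⟨u, rfl⟩ := hu
    have := congrArg (· * (↑u⁻¹ : R)) h
    simpa [mul_assoc] using this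
  · left
    have h1 : IsUnit (1 - x) := isUnit_one_sub_self_of_mem_nonunits _ (mem_nonunits_iff.mpr hu)
    obtain ⟨v, hv⟩ := h1
    have hx : x * (1 - x) = 0 := by linear_combination -h
    rw [← hv] at hx
    have := congrArg (· * (↑v⁻¹ : R)) hx
    simp only [mul_assoc, Units.mul_inv, mul_one, zero_mul] at this
    exact this

lemma bot_ne_top' : (⊥ : Ideal R) ≠ ⊤ := by
  rw [Ne, Ideal.eq_top_iff_one, Ideal.mem_bot]
  exact one_ne_zero

/-- the key converse case: `A` has "eigenvalues" `a` (nonunit) and `b`,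
with `a - b` a unit. -/
lemma case3 (A : Matrix (Fin 2) (Fin 2) R) (a b : R)
    (hsum : A.trace = a + b) (hprod : A.det = a * b)
    (hna : ¬ IsUnit a) (hb : IsUnit b) (hw : IsUnit (a - b)) :
    IsStronglyRadClean A := by
  classical
  set M : Matrix (Fin 2) (Fin 2) R := A - b • (1 : Matrix (Fin 2) (Fin 2) R) with hM
  clear_value M
  have hw1 : (↑hw.unit⁻¹ : R) * (a - b) = 1 := by
    have := hw.unit.inv_mul
    rwa [hw.unit_spec] at this
  set w' : R := (↑hw.unit⁻¹ : R) with hw'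
  clear_value w'
  set e : Matrix (Fin 2) (Fin 2) R := w' • M with he_def
  clear_value e
  -- quadratic identity
  have hch : A * A = (a + b) • A - (a * b) • (1 : Matrix (Fin 2) (Fin 2) R) := by
    rw [ch2 A, hsum, hprod]
  have key : M * M = (a - b) • M := by
    simp only [hM, sub_mul, mul_sub, Matrix.smul_mul, Matrix.mul_smul, smul_smul,
      one_mul, mul_one]
    rw [hch]
    module
  have hee : e * e = e := by
    rw [he_def, Matrix.smul_mul, Matrix.mul_smul, smul_smul, key, smul_smul,
      mul_assoc, hw1, mul_one]
  -- A in terms of e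
  have hMA : (a - b) • e = M := by
    rw [he_def, smul_smul, mul_comm, hw1, one_smul]
  have hA : A = b • (1 : Matrix (Fin 2) (Fin 2) R) + (a - b) • e := by
    rw [hMA, hM]; abel
  have hcomm : A * e = e * A := by
    rw [he_def, Matrix.mul_smul, Matrix.smul_mul]
    congr 1
    rw [hM, mul_sub, sub_mul, Matrix.mul_smul, Matrix.smul_mul, one_mul, mul_one]
  -- A - e is a unit
  have ha1 : IsUnit (a - 1) := by
    have := isUnit_one_sub_self_of_mem_nonunits a (mem_nonunits_iff.mpr hna)
    have h2 : a - 1 = -(1 - a) := by ring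
    rw [h2]; exact this.neg
  have hα : (a - 1) * (↑ha1.unit⁻¹ : R) = 1 := by
    have := ha1.unit.mul_inv; rwa [ha1.unit_spec] at this
  have hβ : b * (↑hb.unit⁻¹ : R) = 1 := by
    have := hb.unit.mul_inv; rwa [hb.unit_spec] at this
  set α : R := (↑ha1.unit⁻¹ : R)
  clear_value α
  set β : R := (↑hb.unit⁻¹ : R)
  clear_value β
  set γ : R := -((a - b - 1) * β * α) with hγ
  clear_value γ
  have hAe : A - e = b • (1 : Matrix (Fin 2) (Fin 2) R) + (a - b - 1) • e := by
    rw [hA]; module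
  set N : Matrix (Fin 2) (Fin 2) R := β • (1 : Matrix (Fin 2) (Fin 2) R) + γ • e with hN
  clear_value N
  have hco : b * γ + (a - b - 1) * β + (a - b - 1) * γ = 0 := by
    rw [hγ]
    linear_combination (-(a - b - 1) * β) * hα
  have hprod1 : (b • (1 : Matrix (Fin 2) (Fin 2) R) + (a - b - 1) • e) * N
      = (b * β) • (1 : Matrix (Fin 2) (Fin 2) R)
        + (b * γ + (a - b - 1) * β + (a - b - 1) * γ) • e := by
    simp only [hN, add_mul, mul_add, Matrix.smul_mul, Matrix.mul_smul, smul_smul,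
      one_mul, mul_one, hee]
    module
  have hprod2 : N * (b • (1 : Matrix (Fin 2) (Fin 2) R) + (a - b - 1) • e)
      = (b * β) • (1 : Matrix (Fin 2) (Fin 2) R)
        + (b * γ + (a - b - 1) * β + (a - b - 1) * γ) • e := by
    simp only [hN, add_mul, mul_add, Matrix.smul_mul, Matrix.mul_smul, smul_smul,
      one_mul, mul_one, hee]
    module
  have hunit : IsUnit (A - e) := by
    refine ⟨⟨A - e, N, ?_, ?_⟩, rfl⟩
    · rw [hAe, hprod1, hβ, hco, one_smul, zero_smul, add_zero]
    · rw [hAe, hprod2, hβ, hco, one_smul, zero_smul, add_zero]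
  -- e A e = a • e
  have heAe : e * A * e = a • e := by
    simp only [hA, mul_add, add_mul, Matrix.mul_smul, Matrix.smul_mul, smul_smul,
      one_mul, mul_one, hee]
    module
  -- corner Jacobson condition
  refine ⟨e, hee, hunit, hcomm, ?_⟩
  intro y
  set x : Matrix (Fin 2) (Fin 2) R := e * y * e with hx
  clear_value x
  have hxe : x * e = x := by rw [hx, mul_assoc (e * y) e e, hee]
  have hex : e * x = x := by rw [hx, ← mul_assoc, ← mul_assoc, hee]
  set M₁ : Matrix (Fin 2) (Fin 2) R := 1 - a • x with hM₁
  clear_value M₁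
  have hM₁u : IsUnit M₁ := by
    rw [hM₁]
    refine isUnit_one_sub_matrix ?_
    intro i j
    have : (a • x) i j = a * x i j := rfl
    rw [this]
    exact Ideal.mul_mem_right _ _ (mem_max_of_not_isUnit hna)
  have hM1e : M₁ * e = e * M₁ := by
    rw [hM₁, sub_mul, mul_sub, one_mul, mul_one, Matrix.smul_mul, Matrix.mul_smul, hxe, hex]
  obtain ⟨U, hU⟩ := hM₁u
  set v : Matrix (Fin 2) (Fin 2) R := (↑U⁻¹ : Matrix (Fin 2) (Fin 2) R) with hv
  clear_value v
  have hv1 : M₁ * v = 1 := by rw [hv, ← hU]; exact U.mul_inv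
  have hv2 : v * M₁ = 1 := by rw [hv, ← hU]; exact U.inv_mul
  have hterm : e - x * (e * A * e) = e * M₁ := by
    rw [heAe, Matrix.mul_smul, hxe, hM₁, mul_sub, mul_one, Matrix.mul_smul, hex]
  have hve : e * v = v * e := by
    calc e * v = v * M₁ * (e * v) := by rw [hv2, one_mul]
      _ = v * (M₁ * e * v) := by simp only [mul_assoc]
      _ = v * (e * (M₁ * v)) := by rw [hM1e, mul_assoc]
      _ = v * e := by rw [hv1, mul_one]
  refine ⟨e * v * e, ?_, ?_, ?_⟩
  · calc e * (e * v * e) * e = (e * e) * v * (e * e) := by simp only [mul_assoc]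
      _ = e * v * e := by rw [hee]
  · rw [hterm]
    calc (e * v * e) * (e * M₁) = e * v * ((e * e) * M₁) := by
          simp only [mul_assoc]
      _ = e * v * (M₁ * e) := by rw [hee, hM1e]
      _ = e * ((v * M₁) * e) := by simp only [mul_assoc]
      _ = e := by rw [hv2, one_mul, hee]
  · rw [hterm]
    calc (e * M₁) * (e * v * e) = (M₁ * e) * (e * v * e) := by rw [hM1e]
      _ = M₁ * (e * e * (v * e)) := by simp only [mul_assoc]
      _ = M₁ * (e * (v * e)) := by rw [hee]
      _ = M₁ * (v * (e * e)) := by rw [← mul_assoc e v e, hve, mul_assoc]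
      _ = M₁ * v * e := by rw [hee, ← mul_assoc]
      _ = e := by rw [hv1, one_mul]

end Stmt7Aux

open Stmt7Aux Matrix IsLocalRing in
theorem stmt7 {R : Type*} [CommRing R] [IsLocalRing R] (h2 : IsUnit (2 : R))
    (A : Matrix (Fin 2) (Fin 2) R) :
    IsStronglyRadClean A ↔
      IsUnit A ∨ (∀ i j, A i j ∈ Ideal.jacobson (⊥ : Ideal R)) ∨
      (IsUnit A.trace ∧ A.det ∈ Ideal.jacobson (⊥ : Ideal R) ∧
        ∃ u : R, A.trace ^ 2 - 4 * A.det = u ^ 2) := by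
  classical
  have hjac : Ideal.jacobson (⊥ : Ideal R) = maximalIdeal R :=
    IsLocalRing.jacobson_eq_maximalIdeal ⊥ bot_ne_top'
  constructor
  · rintro ⟨e, hee, hu, hcomm, hmem⟩
    have hdet_idem : e.det * e.det = e.det := by rw [← Matrix.det_mul, hee.eq]
    rcases idem_zero_or_one hdet_idem with hdet0 | hdet1
    · -- det e = 0
      have he2 : e = e.trace • e := by
        have h := ch2 e
        rw [hee.eq, hdet0, zero_smul, sub_zero] at h
        exact h
      have htr_idem : e.trace * e.trace = e.trace := by
        have h := congrArg Matrix.trace he2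
        rw [Matrix.trace_smul, smul_eq_mul] at h
        exact h.symm
      rcases idem_zero_or_one htr_idem with htr0 | htr1
      · -- e = 0
        have he0 : e = 0 := by rw [he2, htr0, zero_smul]
        left
        rw [he0, sub_zero] at hu
        exact hu
      · -- rank one case
        right; right
        have heAe := corner_eq e A htr1 hdet0
        set lam := (e * A * e).trace with hlam
        -- lam is in the Jacobson radical
        have hlamJ : lam ∈ Ideal.jacobson (⊥ : Ideal R) := by
          rw [Ideal.mem_jacobson_bot]
          intro y
          obtain ⟨s, hs1, hs2, _⟩ := hmem ((-y) • (1 : Matrix (Fin 2) (Fin 2) R))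
          have hse : s * e = s := by
            conv_lhs => rw [← hs1]
            rw [mul_assoc (e * s) e e, hee.eq]
            exact hs1
          have hterm : e - e * ((-y) • (1 : Matrix (Fin 2) (Fin 2) R)) * e * (e * A * e)
              = (1 + y * lam) • e := by
            simp only [heAe, Matrix.mul_smul, Matrix.smul_mul, smul_smul, mul_one, hee.eq]
            module
          rw [hterm, Matrix.mul_smul, hse] at hs2
          have htr := congrArg Matrix.trace hs2
          rw [Matrix.trace_smul, smul_eq_mul, htr1] at htr
          have hunit := IsUnit.of_mul_eq_one _ htr
          have hre : lam * y + 1 = 1 + y * lam := by ring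
          rw [hre]; exact hunit
        set f := (1 : Matrix (Fin 2) (Fin 2) R) - e with hf
        have hff : f * f = f := by
          have hx : f * f = 1 - e - e + e * e := by rw [hf]; noncomm_ring
          rw [hx, hee.eq]
          rw [hf]; abel
        have htrf : f.trace = 1 := by
          rw [hf, Matrix.trace_sub, Matrix.trace_one, htr1]
          norm_num
        have hdf : f.det = 0 := by
          have ht' : e 0 0 + e 1 1 = 1 := by rw [← Matrix.trace_fin_two]; exact htr1
          have hd' : e 0 0 * e 1 1 - e 0 1 * e 1 0 = 0 := by
            rw [← Matrix.det_fin_two]; exact hdet0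
          rw [hf, Matrix.det_fin_two]
          simp only [Matrix.sub_apply, Matrix.one_apply]
          norm_num
          linear_combination -ht' + hd'
        have hfAf := corner_eq f A htrf hdf
        set mu := (f * A * f).trace with hmu
        have hAe : A * e = e * A * e := by
          conv_lhs => rw [← hee.eq, ← mul_assoc, hcomm]
        have hcommf : A * f = f * A := by
          rw [hf, mul_sub, sub_mul, mul_one, one_mul, hcomm]
        have hAf : A * f = f * A * f := by
          conv_lhs => rw [← hff, ← mul_assoc, hcommf]
        have hdecomp : A = lam • e + mu • f := by
          have h1 : A = A * e + A * f := by
            rw [hf, mul_sub, mul_one]; abel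
          rw [h1, hAe, hAf, heAe, hfAf]
        have hAd : A - e = (lam - 1) • e + mu • f := by rw [hdecomp]; module
        have hdu : IsUnit ((lam - 1) * mu) := by
          have h1 := (Matrix.isUnit_iff_isUnit_det _).mp hu
          rw [hAd, hf, det_combo e htr1 hdet0 (lam - 1) mu] at h1
          exact h1
        have hmu_u : IsUnit mu := isUnit_of_mul_isUnit_right hdu
        have hlam_m : lam ∈ maximalIdeal R := by rw [← hjac]; exact hlamJ
        have htrA : A.trace = lam + mu := by
          rw [hdecomp, Matrix.trace_add, Matrix.trace_smul, Matrix.trace_smul, htr1, htrf,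
            smul_eq_mul, smul_eq_mul, mul_one, mul_one]
        have hdetA : A.det = lam * mu := by
          rw [hdecomp, hf, det_combo e htr1 hdet0 lam mu]
        refine ⟨?_, ?_, ⟨lam - mu, ?_⟩⟩
        · rw [htrA]
          by_contra hns
          have h1 : lam + mu ∈ maximalIdeal R := mem_max_of_not_isUnit hns
          have hmu_m : mu ∈ maximalIdeal R := by
            have := Ideal.sub_mem _ h1 hlam_m
            simpa using this
          exact mem_nonunits_iff.mp ((mem_maximalIdeal _).mp hmu_m) hmu_u
        · rw [hdetA, hjac]
          exact Ideal.mul_mem_right _ _ hlam_m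
        · rw [htrA, hdetA]; ring
    · -- det e = 1, so e = 1
      right; left
      have heu : IsUnit e := (Matrix.isUnit_iff_isUnit_det e).mpr (hdet1 ▸ isUnit_one)
      obtain ⟨U, hU⟩ := heu
      have he1 : e = 1 := by
        have h := hee.eq
        rw [← hU] at h
        have h3 := congrArg (fun z => z * (↑U⁻¹ : Matrix (Fin 2) (Fin 2) R)) h
        simp only [mul_assoc, Units.mul_inv, mul_one] at h3
        rw [← hU, h3]
      rw [he1] at hmem
      intro i j
      rw [Ideal.mem_jacobson_bot]
      intro y
      obtain ⟨s, hs1, hs2, hs3⟩ := hmem (Matrix.single j i (-y))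
      simp only [one_mul, mul_one] at hs2 hs3
      have hMu : IsUnit (1 - Matrix.single j i (-y) * A) :=
        ⟨⟨1 - Matrix.single j i (-y) * A, s, hs3, hs2⟩, rfl⟩
      have hdet : (1 - Matrix.single j i (-y) * A).det = A i j * y + 1 := by
        fin_cases i <;> fin_cases j <;>
          · simp [Matrix.det_fin_two, Matrix.mul_apply, Matrix.single,
              Matrix.one_apply, Fin.sum_univ_succ]
            ring
      rw [← hdet]
      exact (Matrix.isUnit_iff_isUnit_det _).mp hMu
  · rintro (hu | hJ | ⟨ht, hd, u, hu2⟩)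
    · exact ⟨0, by simp [IsIdempotentElem], by simpa using hu, by simp,
        fun y => ⟨0, by simp⟩⟩
    · -- A in the radical : e = 1
      have hm : ∀ i j, A i j ∈ maximalIdeal R := fun i j => by
        have := hJ i j; rwa [hjac] at this
      refine ⟨1, by simp [IsIdempotentElem], ?_, by rw [mul_one, one_mul], ?_⟩
      · have h1 := (isUnit_one_sub_matrix hm).neg
        rwa [neg_sub] at h1
      · intro y
        have hB : ∀ i j, (y * A) i j ∈ maximalIdeal R := by
          intro i j
          rw [Matrix.mul_apply]
          exact Ideal.sum_mem _ fun k _ => Ideal.mul_mem_left _ _ (hm k j)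
        obtain ⟨U, hU⟩ := isUnit_one_sub_matrix hB
        refine ⟨↑U⁻¹, by rw [one_mul, mul_one], ?_, ?_⟩
        · show (↑U⁻¹ : Matrix (Fin 2) (Fin 2) R) * (1 - 1 * y * 1 * (1 * A * 1)) = 1
          simp only [one_mul, mul_one]
          rw [← hU]; exact U.inv_mul
        · show (1 - 1 * y * 1 * (1 * A * 1)) * (↑U⁻¹ : Matrix (Fin 2) (Fin 2) R) = 1
          simp only [one_mul, mul_one]
          rw [← hU]; exact U.mul_inv
    · -- the eigenvalue case
      have hd_m : A.det ∈ maximalIdeal R := by rwa [hjac] at hd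
      have hdn : ¬ IsUnit A.det := fun h =>
        mem_nonunits_iff.mp ((mem_maximalIdeal _).mp hd_m) h
      have h21 : 2 * (↑h2.unit⁻¹ : R) = 1 := by
        have := h2.unit.mul_inv; rwa [h2.unit_spec] at this
      set half := (↑h2.unit⁻¹ : R) with hhalf
      clear_value half
      have huu : IsUnit u := by
        have h4 : IsUnit (A.trace * A.trace + (-(4 * A.det))) :=
          isUnit_add_mem' (ht.mul ht) (neg_mem (Ideal.mul_mem_left _ _ hd_m))
        have h5 : u * u = A.trace * A.trace + (-(4 * A.det)) := by linear_combination -hu2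
        rw [← h5] at h4
        exact isUnit_of_mul_isUnit_left h4
      have hsum : A.trace = (A.trace - u) * half + (A.trace + u) * half := by
        linear_combination (-A.trace) * h21
      have hprod : A.det = ((A.trace - u) * half) * ((A.trace + u) * half) := by
        linear_combination (-(half^2)) * hu2 + (-(A.det*(2*half+1))) * h21
      have hdiff : (A.trace + u) * half - (A.trace - u) * half = u := by
        linear_combination u * h21
      have hprod_nu : ¬ (IsUnit ((A.trace - u) * half) ∧ IsUnit ((A.trace + u) * half)) := by
        rintro ⟨x1, x2⟩
        exact hdn (by rw [hprod]; exact x1.mul x2)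
      by_cases h1 : IsUnit ((A.trace - u) * half)
      · have h2n : ¬ IsUnit ((A.trace + u) * half) := fun hx => hprod_nu ⟨h1, hx⟩
        refine case3 A ((A.trace + u) * half) ((A.trace - u) * half)
          (by linear_combination hsum) (by linear_combination hprod) h2n h1 ?_
        rw [hdiff]; exact huu
      · have h2u : IsUnit ((A.trace + u) * half) := by
          rcases IsLocalRing.isUnit_or_isUnit_of_isUnit_add (by rw [← hsum]; exact ht) with h | h
          · exact absurd h h1
          · exact h
        refine case3 A ((A.trace - u) * half) ((A.trace + u) * half) hsum hprod h1 h2u ?_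
        have hd2 : (A.trace - u) * half - (A.trace + u) * half = -u := by
          linear_combination -hdiff
        rw [hd2]; exact huu.neg
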